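/- For any permutation w ∈ S_n and any reduced decomposition ρ of w, the number of (2,1,2)-subnetworks of ρ is at most N_{321}(w), the number of 321-patterns of w. -/

import Mathlib

/-- The adjacent transposition `s_i` of `S_n` (1-based: swaps positions `i` and `i+1`). -/
def adjT (n : ℕ) (i : ℕ) : Equiv.Perm (Fin n) :=
  if h : 1 ≤ i ∧ i < n then Equiv.swap ⟨i - 1, by omega⟩ ⟨i, h.2⟩ else 1

/-- The number of inversions of a permutation of `Fin n`. -/
def invCount (n : ℕ) (w : Equiv.Perm (Fin n)) : ℕ :=
  (Finset.univ.filter fun p : Fin n × Fin n => p.1 < p.2 ∧ w p.2 < w p.1).card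

/-- `ρ` is a reduced decomposition of `w`: a word of length `inv(w)` in the letters
`1, …, n-1` whose product of adjacent transpositions is `w`. -/
def IsReducedDecomp (n : ℕ) (w : Equiv.Perm (Fin n)) (ρ : List ℕ) : Prop :=
  (∀ r ∈ ρ, 1 ≤ r ∧ r < n) ∧ (ρ.map (adjT n)).prod = w ∧ ρ.length = invCount n w

/-- A short braid move: swapping two adjacent letters differing by at least 2. -/
def ShortBraidMove (ρ ρ' : List ℕ) : Prop :=
  ∃ l r : List ℕ, ∃ a b : ℕ, (a + 2 ≤ b ∨ b + 2 ≤ a) ∧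
    ρ = l ++ [a, b] ++ r ∧ ρ' = l ++ [b, a] ++ r

/-- Two words are in the same commutation class iff related by short braid moves. -/
def CommEquiv : List ℕ → List ℕ → Prop := Relation.ReflTransGen ShortBraidMove

/-- A long braid move: `(i+1, i, i+1) ↔ (i, i+1, i)` on a consecutive substring. -/
def LongBraidMove (ρ ρ' : List ℕ) : Prop :=
  ∃ l r : List ℕ, ∃ i : ℕ,
    (ρ = l ++ [i + 1, i, i + 1] ++ r ∧ ρ' = l ++ [i, i + 1, i] ++ r) ∨
    (ρ = l ++ [i, i + 1, i] ++ r ∧ ρ' = l ++ [i + 1, i, i + 1] ++ r)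

/-- The number of commutation classes of reduced decompositions of `w`. -/
noncomputable def numCommClasses (n : ℕ) (w : Equiv.Perm (Fin n)) : ℕ :=
  Nat.card (Quot fun a b : {ρ : List ℕ // IsReducedDecomp n w ρ} => CommEquiv a.1 b.1)

/-- The arrangement (position ↦ value) after the first `k` steps of the word `ρ`. -/
def prefixPerm (n : ℕ) (ρ : List ℕ) (k : ℕ) : Equiv.Perm (Fin n) :=
  ((ρ.take k).map (adjT n)).prod

/-- The word induced by `ρ` on a set `A` of values: record, in order, each step of `ρ`
swapping two values of `A`, labeled (1-based) by the relative position of the swapped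
pair among the values of `A`. -/
def inducedWord (n : ℕ) (ρ : List ℕ) (A : Finset (Fin n)) : List ℕ :=
  (List.range ρ.length).filterMap fun k =>
    let u := prefixPerm n ρ k
    let i := ρ.getD k 0
    if h : 1 ≤ i ∧ i < n then
      if u ⟨i - 1, by omega⟩ ∈ A ∧ u ⟨i, h.2⟩ ∈ A then
        some ((A.filter fun x => (u.symm x : ℕ) < i - 1).card + 1)
      else none
    else none

/-- The number of `(2,1,2)`-subnetworks of `ρ`. -/
def count212 (n : ℕ) (ρ : List ℕ) : ℕ :=
  (Finset.univ.filter fun A : Finset (Fin n) =>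
    A.card = 3 ∧ inducedWord n ρ A = [2, 1, 2]).card

/-- The number of 321-patterns of `w`. -/
def N321 (n : ℕ) (w : Equiv.Perm (Fin n)) : ℕ :=
  (Finset.univ.filter fun t : Fin n × Fin n × Fin n =>
    t.1 < t.2.1 ∧ t.2.1 < t.2.2 ∧ w t.2.2 < w t.2.1 ∧ w t.2.1 < w t.1).card

def VInv (n : ℕ) (u : Equiv.Perm (Fin n)) : Finset (Fin n × Fin n) :=
  Finset.univ.filter fun p => p.1 < p.2 ∧ u.symm p.2 < u.symm p.1

lemma mem_VInv {n : ℕ} {u : Equiv.Perm (Fin n)} {p : Fin n × Fin n} :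
    p ∈ VInv n u ↔ p.1 < p.2 ∧ u.symm p.2 < u.symm p.1 := by
  simp [VInv]

lemma VInv_card (n : ℕ) (u : Equiv.Perm (Fin n)) : (VInv n u).card = invCount n u := by
  unfold invCount
  apply Finset.card_bij' (fun p _ => (u.symm p.2, u.symm p.1)) (fun q _ => (u q.2, u q.1))
  · intro p hp
    rw [mem_VInv] at hp
    simp [Finset.mem_filter, hp.1, hp.2]
  · intro q hq
    simp only [Finset.mem_filter, Finset.mem_univ, true_and] at hq
    rw [mem_VInv]
    simp [hq.1, hq.2]
  · intro p hp; simp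
  · intro q hq; simp

lemma VInv_one (n : ℕ) : VInv n 1 = ∅ := by
  ext p
  simp only [mem_VInv, Finset.notMem_empty, iff_false, not_and]
  intro h1 h2
  exact absurd h2 (by simpa [Equiv.Perm.one_symm] using lt_asymm h1)

lemma swap_lt_swap {n : ℕ} {a b p q : Fin n} (hab : (a : ℕ) + 1 = b) (hpq : p ≠ q) :
    Equiv.swap a b q < Equiv.swap a b p ↔
      ((q < p ∧ ¬(q = a ∧ p = b)) ∨ (p = a ∧ q = b)) := by
  simp only [Equiv.swap_apply_def]
  split_ifs <;>
    simp only [Fin.lt_def, Fin.ext_iff, ne_eq, not_and] at * <;> omega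

lemma VInv_mul_swap {n : ℕ} (u : Equiv.Perm (Fin n)) (a b : Fin n) (hab : (a : ℕ) + 1 = b) :
    (u a < u b ∧ (u a, u b) ∉ VInv n u ∧
       VInv n (u * Equiv.swap a b) = insert (u a, u b) (VInv n u)) ∨
    (u b < u a ∧ (u b, u a) ∈ VInv n u ∧
       VInv n (u * Equiv.swap a b) = (VInv n u).erase (u b, u a)) := by
  have hab2 : a < b := by rw [Fin.lt_def]; omega
  have hne : a ≠ b := ne_of_lt hab2
  have hsymm : ∀ x : Fin n, (u * Equiv.swap a b).symm x = Equiv.swap a b (u.symm x) := by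
    intro x
    rw [Equiv.symm_apply_eq]
    simp [Equiv.Perm.mul_apply]
  have hchar : ∀ x y : Fin n, ((x, y) ∈ VInv n (u * Equiv.swap a b)) ↔
      (x < y ∧ ((u.symm y < u.symm x ∧ ¬(u.symm y = a ∧ u.symm x = b)) ∨
        (u.symm x = a ∧ u.symm y = b))) := by
    intro x y
    rw [mem_VInv]
    constructor
    · rintro ⟨hxy, hlt⟩
      refine ⟨hxy, ?_⟩
      rw [hsymm, hsymm] at hlt
      exact (swap_lt_swap hab (fun hc => absurd (u.symm.injective hc) (ne_of_lt hxy))).mp hlt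
    · rintro ⟨hxy, hor⟩
      refine ⟨hxy, ?_⟩
      rw [hsymm, hsymm]
      exact (swap_lt_swap hab (fun hc => absurd (u.symm.injective hc) (ne_of_lt hxy))).mpr hor
  by_cases hcase : u a < u b
  · left
    refine ⟨hcase, ?_, ?_⟩
    · rw [mem_VInv]
      simp only [not_and]
      intro _
      simp only [Equiv.symm_apply_apply]
      exact fun hc => absurd hc (not_lt.mpr (le_of_lt hab2))
    · ext ⟨x, y⟩
      rw [hchar, Finset.mem_insert, mem_VInv, Prod.mk.injEq]
      constructor
      · rintro ⟨hxy, (⟨h1, _⟩ | ⟨h1, h2⟩)⟩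
        · exact Or.inr ⟨hxy, h1⟩
        · exact Or.inl ⟨by rw [← h1, Equiv.apply_symm_apply], by rw [← h2, Equiv.apply_symm_apply]⟩
      · rintro (⟨rfl, rfl⟩ | ⟨hxy, hlt⟩)
        · exact ⟨hcase, Or.inr ⟨Equiv.symm_apply_apply _ _, Equiv.symm_apply_apply _ _⟩⟩
        · refine ⟨hxy, Or.inl ⟨hlt, ?_⟩⟩
          rintro ⟨h1, h2⟩
          rw [Equiv.symm_apply_eq] at h1 h2
          subst h1; subst h2
          exact absurd hxy (not_lt.mpr (le_of_lt hcase))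
  · right
    have hcase' : u b < u a :=
      lt_of_le_of_ne (not_lt.mp hcase) (fun hc => hne (u.injective hc.symm))
    refine ⟨hcase', ?_, ?_⟩
    · rw [mem_VInv]
      exact ⟨hcase', by simpa using hab2⟩
    · ext ⟨x, y⟩
      rw [hchar, Finset.mem_erase, mem_VInv, Ne, Prod.mk.injEq]
      constructor
      · rintro ⟨hxy, (⟨h1, h2⟩ | ⟨h1, h2⟩)⟩
        · refine ⟨?_, hxy, h1⟩
          rintro ⟨rfl, rfl⟩
          exact h2 ⟨Equiv.symm_apply_apply _ _, Equiv.symm_apply_apply _ _⟩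
        · exfalso
          rw [Equiv.symm_apply_eq] at h1 h2
          subst h1; subst h2
          exact absurd hxy (not_lt.mpr (le_of_lt hcase'))
      · rintro ⟨hne', hxy, hlt⟩
        refine ⟨hxy, Or.inl ⟨hlt, ?_⟩⟩
        rintro ⟨h1, h2⟩
        rw [Equiv.symm_apply_eq] at h1 h2
        exact hne' ⟨h2, h1⟩

def stepPair? (n : ℕ) (ρ : List ℕ) (k : ℕ) : Option (Fin n × Fin n) :=
  let i := ρ.getD k 0
  if h : 1 ≤ i ∧ i < n then
    some (prefixPerm n ρ k ⟨i - 1, by omega⟩, prefixPerm n ρ k ⟨i, h.2⟩)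
  else none

lemma prefixPerm_zero (n : ℕ) (ρ : List ℕ) : prefixPerm n ρ 0 = 1 := rfl

lemma getD_eq {ρ : List ℕ} {k : ℕ} (hk : k < ρ.length) : ρ.getD k 0 = ρ[k] := by
  simp [List.getD_eq_getElem?_getD, List.getElem?_eq_getElem hk]

lemma prefixPerm_succ (n : ℕ) (ρ : List ℕ) (k : ℕ) (hk : k < ρ.length) :
    prefixPerm n ρ (k + 1) = prefixPerm n ρ k * adjT n (ρ.getD k 0) := by
  unfold prefixPerm
  rw [getD_eq hk, List.take_succ, List.getElem?_eq_getElem hk]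
  rw [Option.toList_some, List.map_append, List.prod_append, List.map_singleton,
    List.prod_singleton]

lemma prefixPerm_length (n : ℕ) (w : Equiv.Perm (Fin n)) (ρ : List ℕ)
    (h : IsReducedDecomp n w ρ) : prefixPerm n ρ ρ.length = w := by
  unfold prefixPerm
  rw [List.take_length]
  exact h.2.1

/-- Dichotomy of a step. -/
lemma step_dichotomy (n : ℕ) (ρ : List ℕ) (hmem : ∀ r ∈ ρ, 1 ≤ r ∧ r < n)
    (k : ℕ) (hk : k < ρ.length) :
    (∃ p, stepPair? n ρ k = some p ∧ p ∉ VInv n (prefixPerm n ρ k) ∧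
       VInv n (prefixPerm n ρ (k + 1)) = insert p (VInv n (prefixPerm n ρ k))) ∨
    (∃ p, p ∈ VInv n (prefixPerm n ρ k) ∧
       VInv n (prefixPerm n ρ (k + 1)) = (VInv n (prefixPerm n ρ k)).erase p) := by
  have hi : 1 ≤ ρ.getD k 0 ∧ ρ.getD k 0 < n := by
    rw [getD_eq hk]; exact hmem _ (List.getElem_mem hk)
  set i := ρ.getD k 0 with hidef
  set u := prefixPerm n ρ k with hudef
  have ha : i - 1 < n := by omega
  set a : Fin n := ⟨i - 1, ha⟩ with hadef
  set b : Fin n := ⟨i, hi.2⟩ with hbdef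
  have hab : (a : ℕ) + 1 = b := by simp [hadef, hbdef]; omega
  have hadj : adjT n i = Equiv.swap a b := by rw [adjT, dif_pos hi]
  have hsp : stepPair? n ρ k = some (u a, u b) := by rw [stepPair?]; rw [dif_pos hi]
  have hsucc : prefixPerm n ρ (k + 1) = u * Equiv.swap a b := by
    rw [prefixPerm_succ n ρ k hk, ← hidef, hadj]
  rw [hsucc]
  rcases VInv_mul_swap u a b hab with ⟨h1, h2, h3⟩ | ⟨h1, h2, h3⟩
  · exact Or.inl ⟨(u a, u b), hsp, h2, h3⟩
  · exact Or.inr ⟨(u b, u a), h2, h3⟩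

lemma card_VInv_le (n : ℕ) (ρ : List ℕ) (hmem : ∀ r ∈ ρ, 1 ≤ r ∧ r < n) :
    ∀ k, k ≤ ρ.length → (VInv n (prefixPerm n ρ k)).card ≤ k := by
  intro k
  induction k with
  | zero => intro _; simp [prefixPerm_zero, VInv_one]
  | succ k ih =>
    intro hk
    have hk' : k < ρ.length := hk
    rcases step_dichotomy n ρ hmem k hk' with ⟨p, _, hp2, hp3⟩ | ⟨p, hp1, hp3⟩
    · rw [hp3, Finset.card_insert_of_notMem hp2]
      exact Nat.succ_le_succ (ih (le_of_lt hk'))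
    · rw [hp3, Finset.card_erase_of_mem hp1]
      have := ih (le_of_lt hk')
      omega

lemma card_VInv_drop (n : ℕ) (ρ : List ℕ) (hmem : ∀ r ∈ ρ, 1 ≤ r ∧ r < n) :
    ∀ j k, k + j ≤ ρ.length →
      (VInv n (prefixPerm n ρ (k + j))).card ≤ (VInv n (prefixPerm n ρ k)).card + j := by
  intro j
  induction j with
  | zero => intro k _; simp
  | succ j ih =>
    intro k hkj
    have hk' : k + j < ρ.length := by omega
    have h1 : (VInv n (prefixPerm n ρ (k + j + 1))).card
        ≤ (VInv n (prefixPerm n ρ (k + j))).card + 1 := by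
      rcases step_dichotomy n ρ hmem (k + j) hk' with ⟨p, _, hp2, hp3⟩ | ⟨p, hp1, hp3⟩
      · rw [hp3, Finset.card_insert_of_notMem hp2]
      · rw [hp3, Finset.card_erase_of_mem hp1]; omega
    have h2 := ih k (by omega)
    calc (VInv n (prefixPerm n ρ (k + (j + 1)))).card
        = (VInv n (prefixPerm n ρ (k + j + 1))).card := by ring_nf
      _ ≤ (VInv n (prefixPerm n ρ (k + j))).card + 1 := h1
      _ ≤ (VInv n (prefixPerm n ρ k)).card + (j + 1) := by omega

lemma card_VInv_eq (n : ℕ) (w : Equiv.Perm (Fin n)) (ρ : List ℕ)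
    (h : IsReducedDecomp n w ρ) :
    ∀ k, k ≤ ρ.length → (VInv n (prefixPerm n ρ k)).card = k := by
  intro k hk
  have hfin : (VInv n (prefixPerm n ρ ρ.length)).card = ρ.length := by
    rw [prefixPerm_length n w ρ h, VInv_card, ← h.2.2]
  have h1 := card_VInv_le n ρ h.1 k hk
  have h2 := card_VInv_drop n ρ h.1 (ρ.length - k) k (by omega)
  rw [show k + (ρ.length - k) = ρ.length by omega, hfin] at h2
  omega

/-- The main per-step lemma: each step of a reduced word inserts its swapped pair. -/
lemma step_main (n : ℕ) (w : Equiv.Perm (Fin n)) (ρ : List ℕ)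
    (h : IsReducedDecomp n w ρ) (k : ℕ) (hk : k < ρ.length) :
    ∃ p : Fin n × Fin n,
      stepPair? n ρ k = some p ∧
      p ∉ VInv n (prefixPerm n ρ k) ∧
      VInv n (prefixPerm n ρ (k + 1)) = insert p (VInv n (prefixPerm n ρ k)) := by
  rcases step_dichotomy n ρ h.1 k hk with hgood | ⟨p, hp1, hp3⟩
  · exact hgood
  · exfalso
    have e1 := card_VInv_eq n w ρ h k (le_of_lt hk)
    have e2 := card_VInv_eq n w ρ h (k + 1) hk
    rw [hp3, Finset.card_erase_of_mem hp1, e1] at e2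
    omega

lemma VInv_mono (n : ℕ) (w : Equiv.Perm (Fin n)) (ρ : List ℕ)
    (h : IsReducedDecomp n w ρ) :
    ∀ k k', k ≤ k' → k' ≤ ρ.length →
      VInv n (prefixPerm n ρ k) ⊆ VInv n (prefixPerm n ρ k') := by
  intro k k' hkk'
  induction k' with
  | zero => intro _; rw [Nat.le_zero.mp hkk']
  | succ k' ih =>
    intro hk'
    rcases Nat.eq_or_lt_of_le hkk' with rfl | hlt
    · exact fun _ z => z
    · obtain ⟨p, _, _, h3⟩ := step_main n w ρ h k' hk'
      rw [h3]
      exact (ih (by omega) (by omega)).trans (Finset.subset_insert _ _)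

def indF (n : ℕ) (ρ : List ℕ) (A : Finset (Fin n)) (k : ℕ) : Option ℕ :=
  let u := prefixPerm n ρ k
  let i := ρ.getD k 0
  if h : 1 ≤ i ∧ i < n then
    if u ⟨i - 1, by omega⟩ ∈ A ∧ u ⟨i, h.2⟩ ∈ A then
      some ((A.filter fun x => (u.symm x : ℕ) < i - 1).card + 1)
    else none
  else none

lemma inducedWord_eq (n : ℕ) (ρ : List ℕ) (A : Finset (Fin n)) :
    inducedWord n ρ A = (List.range ρ.length).filterMap (indF n ρ A) := rfl

lemma indF_isSome {n : ℕ} {ρ : List ℕ} {A : Finset (Fin n)} {k : ℕ} :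
    (indF n ρ A k).isSome = true ↔
      ∃ p, stepPair? n ρ k = some p ∧ p.1 ∈ A ∧ p.2 ∈ A := by
  simp only [indF, stepPair?]
  split_ifs with h1 h2
  · simp only [Option.isSome_some, true_iff]
    exact ⟨_, rfl, h2.1, h2.2⟩
  · simp only [Option.isSome_none, Bool.false_eq_true, false_iff, not_exists]
    rintro p ⟨hp, hp1, hp2⟩
    cases hp
    exact h2 ⟨hp1, hp2⟩
  · simp

lemma length_filterMap {α β : Type*} (f : α → Option β) (l : List α) :
    (l.filterMap f).length = (l.filter fun a => (f a).isSome).length := by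
  induction l with
  | nil => rfl
  | cons a t ih =>
    cases hfa : f a <;> simp [List.filterMap_cons, List.filter_cons, hfa, ih]

lemma exists_sorted_three {α : Type*} [DecidableEq α] [LinearOrder α] {s : Finset α} (hs : s.card = 3) :
    ∃ x y z : α, x < y ∧ y < z ∧ s = {x, y, z} := by
  obtain ⟨a, b, c, hab, hac, hbc, rfl⟩ := Finset.card_eq_three.mp hs
  rcases hab.lt_or_gt with h1 | h1 <;> rcases hac.lt_or_gt with h2 | h2 <;>
    rcases hbc.lt_or_gt with h3 | h3
  · exact ⟨a, b, c, h1, h3, rfl⟩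
  · exact ⟨a, c, b, h2, h3, by ext t; simp; tauto⟩
  · exact absurd (h1.trans h3) (not_lt.mpr h2.le)
  · exact ⟨c, a, b, h2, h1, by ext t; simp; tauto⟩
  · exact ⟨b, a, c, h1, h2, by ext t; simp; tauto⟩
  · exact absurd (h2.trans h3) (not_lt.mpr h1.le)
  · exact ⟨b, c, a, h3, h2, by ext t; simp; tauto⟩
  · exact ⟨c, b, a, h3, h1, by ext t; simp; tauto⟩

/-- The number of `(2,1,2)`-subnetworks of any reduced decomposition of
`w` is at most the number of 321-patterns of `w`. -/
theorem count212_le_N321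
    (n : ℕ) (w : Equiv.Perm (Fin n)) (ρ : List ℕ) (h : IsReducedDecomp n w ρ) :
    count212 n ρ ≤ N321 n w := by
  have key : ∀ k, k < ρ.length → ∀ p, stepPair? n ρ k = some p → p ∈ VInv n w := by
    intro k hk p hp
    obtain ⟨q, hq, hq2, hq3⟩ := step_main n w ρ h k hk
    rw [hp] at hq
    cases hq
    have h1 : p ∈ VInv n (prefixPerm n ρ (k + 1)) := by
      rw [hq3]; exact Finset.mem_insert_self _ _
    have h2 := VInv_mono n w ρ h (k + 1) ρ.length hk (le_refl _) h1
    rwa [prefixPerm_length n w ρ h] at h2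
  have inj : ∀ k k', k < ρ.length → k' < ρ.length → ∀ p, stepPair? n ρ k = some p →
      stepPair? n ρ k' = some p → k = k' := by
    have aux : ∀ k k', k < k' → k' < ρ.length → ∀ p, stepPair? n ρ k = some p →
        stepPair? n ρ k' = some p → False := by
      intro k k' hkk' hk' p hp hp'
      obtain ⟨q, hq, hq2, hq3⟩ := step_main n w ρ h k (lt_trans hkk' hk')
      rw [hp] at hq; cases hq
      obtain ⟨q', hq', hq2', _⟩ := step_main n w ρ h k' hk'
      rw [hp'] at hq'; cases hq'
      have h1 : p ∈ VInv n (prefixPerm n ρ (k + 1)) := by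
        rw [hq3]; exact Finset.mem_insert_self _ _
      exact hq2' (VInv_mono n w ρ h (k + 1) k' hkk' (le_of_lt hk') h1)
    intro k k' hk hk' p hp hp'
    rcases lt_trichotomy k k' with hlt | heq | hgt
    · exact absurd (aux k k' hlt hk' p hp hp') not_false
    · exact heq
    · exact absurd (aux k' k hgt hk p hp' hp) not_false
  unfold count212 N321
  apply Finset.card_le_card_of_surjOn
    (fun t : Fin n × Fin n × Fin n => ({w t.1, w t.2.1, w t.2.2} : Finset (Fin n)))
  intro A hA
  simp only [Finset.coe_filter, Set.mem_setOf_eq, Finset.mem_univ, true_and] at hA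
  obtain ⟨hcard, hword⟩ := hA
  obtain ⟨x, y, z, hxy, hyz, rfl⟩ := exists_sorted_three hcard
  -- the set of contributing steps
  have hlen3 : ((List.range ρ.length).filter fun k =>
      (indF n ρ {x, y, z} k).isSome).length = 3 := by
    have hl := congrArg List.length hword
    rw [inducedWord_eq, length_filterMap] at hl
    simpa using hl
  set L : List ℕ := (List.range ρ.length).filter fun k => (indF n ρ {x, y, z} k).isSome
    with hL
  have hnodup : L.Nodup := (List.nodup_range).filter _
  set T : Finset ℕ := ⟨(L : Multiset ℕ), by exact_mod_cast hnodup⟩ with hT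
  have hTcard : T.card = 3 := hlen3
  have hTmem : ∀ k, k ∈ T ↔ k < ρ.length ∧ (indF n ρ {x, y, z} k).isSome := by
    intro k
    rw [hT]
    simp only [Finset.mem_mk, Multiset.mem_coe, hL, List.mem_filter, List.mem_range]
  have hEx : ∀ k ∈ T, ∃ p, stepPair? n ρ k = some p ∧
      p.1 ∈ ({x, y, z} : Finset (Fin n)) ∧ p.2 ∈ ({x, y, z} : Finset (Fin n)) :=
    fun k hk => indF_isSome.mp ((hTmem k).mp hk).2
  set t3 : Finset (Fin n × Fin n) := {(x, y), (x, z), (y, z)} with ht3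
  have ht3card : t3.card = 3 := by
    rw [ht3]
    rw [Finset.card_insert_of_notMem, Finset.card_insert_of_notMem,
      Finset.card_singleton]
    · simp only [Finset.mem_singleton, Prod.mk.injEq, not_and]
      exact fun h' => absurd h' hxy.ne
    · simp only [Finset.mem_insert, Finset.mem_singleton, Prod.mk.injEq, not_or, not_and]
      exact ⟨fun _ => hyz.ne, fun _ => hyz.ne⟩
  have hmap : ∀ (k) (hk : k ∈ T), (hEx k hk).choose ∈ t3 := by
    intro k hk
    have hsp := (hEx k hk).choose_spec.1
    have hp1 := (hEx k hk).choose_spec.2.1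
    have hp2 := (hEx k hk).choose_spec.2.2
    have hkm : k < ρ.length := ((hTmem k).mp hk).1
    have hlt := (mem_VInv.mp (key k hkm _ hsp)).1
    rw [ht3]
    clear hsp
    revert hp1 hp2 hlt
    generalize (hEx k hk).choose = p
    rcases p with ⟨p1, p2⟩
    intro hp1 hp2 hlt
    simp only [Finset.mem_insert, Finset.mem_singleton] at hp1 hp2 ⊢
    simp only [Prod.mk.injEq]
    rcases hp1 with rfl | rfl | rfl <;> rcases hp2 with rfl | rfl | rfl <;>
      first
        | exact absurd hlt (lt_irrefl _)
        | exact absurd hlt (lt_asymm hxy)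
        | exact absurd hlt (lt_asymm hyz)
        | exact absurd hlt (lt_asymm (hxy.trans hyz))
        | tauto
  have hinj : ∀ k₁ k₂ hk₁ hk₂, (hEx k₁ hk₁).choose = (hEx k₂ hk₂).choose → k₁ = k₂ := by
    intro k1 k2 hk1 hk2 he
    have h1 := (hEx k1 hk1).choose_spec.1
    have h2 := (hEx k2 hk2).choose_spec.1
    rw [he] at h1
    exact inj k1 k2 ((hTmem k1).mp hk1).1 ((hTmem k2).mp hk2).1 _ h1 h2
  have hsurj := Finset.surj_on_of_inj_on_of_card_le (fun k hk => (hEx k hk).choose)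
    hmap hinj (by rw [hTcard, ht3card])
  have pairVInv : ∀ p ∈ t3, p ∈ VInv n w := by
    intro p hp
    obtain ⟨k, hk, hkeq⟩ := hsurj p hp
    have hpe : p = (hEx k hk).choose := hkeq
    have hsp := (hEx k hk).choose_spec.1
    rw [hpe]
    exact key k ((hTmem k).mp hk).1 _ hsp
  have hxyI := mem_VInv.mp (pairVInv (x, y) (by rw [ht3]; simp))
  have hyzI := mem_VInv.mp (pairVInv (y, z) (by rw [ht3]; simp))
  refine ⟨(w.symm z, w.symm y, w.symm x), ?_, ?_⟩
  · simp only [Finset.coe_filter, Set.mem_setOf_eq, Finset.mem_univ, true_and]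
    exact ⟨hyzI.2, hxyI.2, by simp [hxy], by simp [hyz]⟩
  · simp only [Equiv.apply_symm_apply]
    ext t
    simp only [Finset.mem_insert, Finset.mem_singleton]
    tauto
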